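/- For all real numbers R and δ with 0 < δ ≤ R, the following identity holds: ∫₀^δ √(log(R/ε)) dε = δ·√(log(R/δ)) + R·∫_{√(log(R/δ))}^{∞} e^{-t²} dt. -/

import Mathlib

open MeasureTheory Real
open scoped Topology

open Set Filter intervalIntegral in
/-- Entropy-integral identity: for `0 < δ ≤ R`,
`∫₀^δ √(log(R/ε)) dε = δ√(log(R/δ)) + R ∫_{√(log(R/δ))}^∞ e^{-t²} dt`. -/
theorem entropy_integral_identity (R δ : ℝ) (hδ : 0 < δ) (hδR : δ ≤ R) :
    ∫ ε in (0 : ℝ)..δ, Real.sqrt (Real.log (R / ε)) =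
      δ * Real.sqrt (Real.log (R / δ)) +
        R * ∫ t in Set.Ioi (Real.sqrt (Real.log (R / δ))), Real.exp (-t ^ 2) := by
  have hR : 0 < R := hδ.trans_le hδR
  set f : ℝ → ℝ := fun ε => Real.sqrt (Real.log (R / ε)) with hfdef
  -- continuity of f away from 0
  have hfc : ∀ x : ℝ, x ≠ 0 → ContinuousAt f x := by
    intro x hx
    exact Real.continuous_sqrt.continuousAt.comp
      ((Real.continuousAt_log (div_ne_zero hR.ne' hx)).comp
        (continuousAt_const.div continuousAt_id hx))
  have hfcOn : ContinuousOn f (Ioi (0 : ℝ)) := fun x hx =>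
    (hfc x (ne_of_gt hx)).continuousWithinAt
  -- integrability of f on (0, δ]
  have hG : IntegrableOn (fun ε : ℝ => Real.sqrt R * ε ^ (-(1 / 2) : ℝ)) (Ioc 0 δ) := by
    have : IntervalIntegrable (fun ε : ℝ => ε ^ (-(1 / 2) : ℝ)) volume 0 δ :=
      intervalIntegral.intervalIntegrable_rpow' (by norm_num)
    exact ((intervalIntegrable_iff_integrableOn_Ioc_of_le hδ.le).mp this).const_mul _
  have hbound : ∀ ε ∈ Ioc (0 : ℝ) δ, f ε ≤ Real.sqrt R * ε ^ (-(1 / 2) : ℝ) := by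
    intro ε hε
    have hε0 : 0 < ε := hε.1
    have h1 : Real.log (R / ε) ≤ R / ε := by
      have := Real.log_le_sub_one_of_pos (div_pos hR hε0)
      linarith
    calc f ε ≤ Real.sqrt (R / ε) := Real.sqrt_le_sqrt h1
      _ = Real.sqrt R * ε ^ (-(1 / 2) : ℝ) := by
          rw [Real.sqrt_div hR.le, Real.rpow_neg hε0.le, ← Real.sqrt_eq_rpow]
          rw [div_eq_mul_inv]
  have hIntOn : IntegrableOn f (Ioc 0 δ) := by
    apply MeasureTheory.Integrable.mono hG ((hfcOn.mono Ioc_subset_Ioi_self).aestronglyMeasurable measurableSet_Ioc)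
    rw [ae_restrict_iff' measurableSet_Ioc]
    filter_upwards with ε hε
    have h0 : (0 : ℝ) ≤ f ε := Real.sqrt_nonneg _
    have h2 : (0 : ℝ) ≤ ε ^ (-(1 / 2) : ℝ) := Real.rpow_nonneg hε.1.le _
    rw [Real.norm_eq_abs, Real.norm_eq_abs, abs_of_nonneg h0, abs_of_nonneg (by positivity)]
    exact hbound ε hε
  have hIntf : IntervalIntegrable f volume 0 δ :=
    (intervalIntegrable_iff_integrableOn_Ioc_of_le hδ.le).mpr hIntOn
  -- the gaussian
  have hgauss : Integrable (fun t : ℝ => Real.exp (-t ^ 2)) := by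
    have := integrable_exp_neg_mul_sq (b := 1) one_pos
    simpa using this
  have hgausscont : Continuous (fun t : ℝ => Real.exp (-t ^ 2)) := by
    continuity
  set E : ℝ → ℝ := fun y => ∫ t in (0 : ℝ)..y, Real.exp (-t ^ 2) with hEdef
  have hE : ∀ y : ℝ, HasDerivAt E (Real.exp (-y ^ 2)) y := fun y =>
    intervalIntegral.integral_hasDerivAt_right hgauss.intervalIntegrable
      hgausscont.stronglyMeasurable.stronglyMeasurableAtFilter hgausscont.continuousAt
  have hEcont : Continuous E :=
    continuous_iff_continuousAt.mpr fun y => (hE y).continuousAt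
  set C : ℝ := ∫ t in Ioi (0 : ℝ), Real.exp (-t ^ 2) with hC
  set H : ℝ → ℝ := fun x => (∫ ε in x..δ, f ε) + x * f x - R * E (f x) with hH
  -- Step 1: H is constant on (0, δ]
  have key : ∀ x₀ ∈ Ioc (0 : ℝ) δ, H δ = H x₀ := by
    intro x₀ hx₀
    have hsub : Icc x₀ δ ⊆ Ioi (0 : ℝ) := fun x hx => hx₀.1.trans_le hx.1
    have hIcc : IntegrableOn f (Icc x₀ δ) :=
      hIntOn.mono (fun x hx => ⟨hx₀.1.trans_le hx.1, hx.2⟩) le_rfl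
    have hcont : ContinuousOn H (Icc x₀ δ) := by
      have c1 : ContinuousOn (fun x => ∫ ε in x..δ, f ε) (Icc x₀ δ) := by
        have := intervalIntegral.continuousOn_primitive_interval_left
          (a := x₀) (b := δ) (f := f) (μ := volume)
          (by rwa [uIcc_of_le hx₀.2])
        rwa [uIcc_of_le hx₀.2] at this
      have c2 : ContinuousOn (fun x => x * f x) (Icc x₀ δ) :=
        continuousOn_id.mul (hfcOn.mono hsub)
      have c3 : ContinuousOn (fun x => E (f x)) (Icc x₀ δ) :=
        hEcont.comp_continuousOn (hfcOn.mono hsub)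
      exact (c1.add c2).sub (continuousOn_const.mul c3)
    have hderiv : ∀ x ∈ Ico x₀ δ, HasDerivWithinAt H 0 (Ici x) x := by
      intro x hx
      have hx0 : 0 < x := hx₀.1.trans_le hx.1
      have hxR : x < R := hx.2.trans_le hδR
      have hL : 0 < Real.log (R / x) := Real.log_pos ((one_lt_div hx0).mpr hxR)
      -- derivative of log (R/·)
      have hlog : HasDerivAt (fun u : ℝ => Real.log (R / u)) (-x⁻¹) x := by
        have h1 : HasDerivAt (fun u : ℝ => Real.log R - Real.log u) (-x⁻¹) x :=
          (Real.hasDerivAt_log hx0.ne').const_sub (Real.log R)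
        apply h1.congr_of_eventuallyEq
        filter_upwards [eventually_gt_nhds hx0] with u hu
        rw [Real.log_div hR.ne' (ne_of_gt hu)]
      have hgx : HasDerivAt f (1 / (2 * Real.sqrt (Real.log (R / x))) * -x⁻¹) x := by
        have := (Real.hasDerivAt_sqrt hL.ne').comp x hlog
        simpa [Function.comp_def, hfdef] using this
      set g' : ℝ := 1 / (2 * Real.sqrt (Real.log (R / x))) * -x⁻¹ with hg'
      have h1 : HasDerivAt (fun u => ∫ ε in u..δ, f ε) (-f x) x := by
        apply intervalIntegral.integral_hasDerivAt_left
          (hIntf.mono_set (uIcc_subset_uIcc (by simp [hx0.le, hx.2.le, hδ.le])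
            (by simp [hδ.le])))
          (hfcOn.stronglyMeasurableAtFilter isOpen_Ioi x hx0)
          (hfc x hx0.ne')
      have h2 : HasDerivAt (fun u => u * f u) (1 * f x + x * g') x :=
        (hasDerivAt_id x).mul hgx
      have h3 : HasDerivAt (fun u => E (f u)) (x / R * g') x := by
        have h := (hE (f x)).comp x hgx
        have hfx2 : f x ^ 2 = Real.log (R / x) := Real.sq_sqrt hL.le
        have hexp : Real.exp (-f x ^ 2) = x / R := by
          rw [hfx2, Real.exp_neg, Real.exp_log (div_pos hR hx0), inv_div]
        rwa [hexp] at h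
      have htot : HasDerivAt H (-f x + (1 * f x + x * g') - R * (x / R * g')) x :=
        (h1.add h2).sub (h3.const_mul R)
      have hzero : -f x + (1 * f x + x * g') - R * (x / R * g') = 0 := by
        field_simp
        ring
      rw [hzero] at htot
      exact htot.hasDerivWithinAt
    have := constant_of_has_deriv_right_zero hcont hderiv
    exact this δ (right_mem_Icc.mpr hx₀.2)
  -- Step 2: limits as x₀ → 0⁺
  have hIocmem : Ioc (0 : ℝ) δ ∈ 𝓝[>] (0 : ℝ) := Ioc_mem_nhdsGT_of_mem ⟨le_refl 0, hδ⟩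
  -- T1
  have T1 : Tendsto (fun x => ∫ ε in x..δ, f ε) (𝓝[>] (0 : ℝ))
      (𝓝 (∫ ε in (0 : ℝ)..δ, f ε)) := by
    have hIcc0 : IntegrableOn f (Icc 0 δ) := by
      rwa [integrableOn_Icc_iff_integrableOn_Ioc]
    have hcOn : ContinuousOn (fun x => ∫ ε in x..δ, f ε) (Icc 0 δ) := by
      have := intervalIntegral.continuousOn_primitive_interval_left
        (a := (0 : ℝ)) (b := δ) (f := f) (μ := volume) (by rwa [uIcc_of_le hδ.le])
      rwa [uIcc_of_le hδ.le] at this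
    have := (hcOn 0 (left_mem_Icc.mpr hδ.le)).tendsto
    rw [← nhdsWithin_Ioc_eq_nhdsGT hδ]
    exact this.mono_left (nhdsWithin_mono _ Ioc_subset_Icc_self)
  -- T2
  have T2 : Tendsto (fun x => x * f x) (𝓝[>] (0 : ℝ)) (𝓝 0) := by
    apply squeeze_zero' (g := fun x => Real.sqrt R * Real.sqrt x)
    · filter_upwards [self_mem_nhdsWithin] with x hx
      have : (0 : ℝ) < x := hx
      positivity
    · filter_upwards [hIocmem] with x hx
      have hx0 : 0 < x := hx.1
      calc x * f x ≤ x * (Real.sqrt R / Real.sqrt x) := by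
            apply mul_le_mul_of_nonneg_left _ hx0.le
            calc f x ≤ Real.sqrt (R / x) := Real.sqrt_le_sqrt
                  (by have := Real.log_le_sub_one_of_pos (div_pos hR hx0); linarith)
              _ = Real.sqrt R / Real.sqrt x := Real.sqrt_div hR.le x
        _ = Real.sqrt R * (x / Real.sqrt x) := by ring
        _ = Real.sqrt R * Real.sqrt x := by rw [Real.div_sqrt]
    · have : Tendsto (fun x : ℝ => Real.sqrt R * Real.sqrt x) (𝓝 0)
          (𝓝 (Real.sqrt R * Real.sqrt 0)) :=
        (continuous_const.mul Real.continuous_sqrt).tendsto 0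
      simpa using this.mono_left nhdsWithin_le_nhds
  -- T3
  have hgtop : Tendsto f (𝓝[>] (0 : ℝ)) atTop := by
    have h1 : Tendsto (fun x : ℝ => Real.log (R / x)) (𝓝[>] (0 : ℝ)) atTop := by
      have h2 : Tendsto (fun x : ℝ => Real.log R - Real.log x) (𝓝[>] (0 : ℝ)) atTop := by
        have hneg : Tendsto (fun x : ℝ => -Real.log x) (𝓝[>] (0 : ℝ)) atTop :=
          tendsto_neg_atBot_atTop.comp Real.tendsto_log_nhdsGT_zero
        simpa [sub_eq_add_neg] using Filter.tendsto_atTop_add_const_left _ (Real.log R) hneg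
      apply h2.congr'
      filter_upwards [self_mem_nhdsWithin] with x hx
      rw [Real.log_div hR.ne' (ne_of_gt hx)]
    have hsqrt : Tendsto Real.sqrt atTop atTop := by
      have := tendsto_rpow_atTop (y := 1 / 2) (by norm_num)
      apply this.congr
      intro x
      rw [← Real.sqrt_eq_rpow]
    exact hsqrt.comp h1
  have T3 : Tendsto (fun x => E (f x)) (𝓝[>] (0 : ℝ)) (𝓝 C) :=
    intervalIntegral_tendsto_integral_Ioi 0 hgauss.integrableOn hgtop
  -- combine
  have hT : Tendsto H (𝓝[>] (0 : ℝ))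
      (𝓝 ((∫ ε in (0 : ℝ)..δ, f ε) + 0 - R * C)) :=
    (T1.add T2).sub (T3.const_mul R)
  have hHconst : ∀ᶠ x in 𝓝[>] (0 : ℝ), H x = H δ := by
    filter_upwards [hIocmem] with x hx
    exact (key x hx).symm
  have hlim : (∫ ε in (0 : ℝ)..δ, f ε) + 0 - R * C = H δ := by
    apply tendsto_nhds_unique (hT.congr' hHconst) tendsto_const_nhds
  have hHδ : H δ = δ * f δ - R * E (f δ) := by
    simp [hH, intervalIntegral.integral_same]
  -- split the gaussian integral
  have hsplit : C = E (f δ) + ∫ t in Ioi (f δ), Real.exp (-t ^ 2) := by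
    have h0 : (0 : ℝ) ≤ f δ := Real.sqrt_nonneg _
    rw [hC, hEdef]
    beta_reduce
    rw [intervalIntegral.integral_of_le h0,
      ← MeasureTheory.setIntegral_union (Ioc_disjoint_Ioi le_rfl) measurableSet_Ioi
        hgauss.integrableOn hgauss.integrableOn,
      Ioc_union_Ioi_eq_Ioi h0]
  rw [hHδ] at hlim
  have : R * C - R * E (f δ) = R * ∫ t in Ioi (f δ), Real.exp (-t ^ 2) := by
    rw [hsplit]; ring
  linarith [hlim, this]
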